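/- Let G be a graph with a perfect matching M, and let 𝒜 be a compatible M-alternating set of cycles of G. Then af(G, M) ≥ |𝒜|, i.e., the anti-forcing number of M is at least the cardinality of any compatible M-alternating set. -/

import Mathlib

open scoped Classical

variable {V : Type*} [Fintype V] [DecidableEq V]

/-- `M` is a perfect matching of `G`: a set of edges of `G` such that every
vertex lies in exactly one edge of `M`. -/
def IsPM (G : SimpleGraph V) (M : Set (Sym2 V)) : Prop :=
  M ⊆ G.edgeSet ∧ ∀ v : V, ∃! e, e ∈ M ∧ v ∈ e

/-- `M` is the unique perfect matching of `G`. -/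
def IsUniquePM (G : SimpleGraph V) (M : Set (Sym2 V)) : Prop :=
  IsPM G M ∧ ∀ M', IsPM G M' → M' = M

/-- A closed walk `c` is an `M`-alternating cycle: it is a cycle of even length
whose edges lie alternately in `M` and outside `M`. -/
def IsAltCycle {G : SimpleGraph V} (M : Set (Sym2 V)) {v : V} (c : G.Walk v v) : Prop :=
  c.IsCycle ∧ Even c.edges.length ∧
    ((∀ i (h : i < c.edges.length), c.edges.get ⟨i, h⟩ ∈ M ↔ Even i) ∨
     (∀ i (h : i < c.edges.length), c.edges.get ⟨i, h⟩ ∈ M ↔ ¬ Even i))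

/-- `S` is an anti-forcing set of the perfect matching `M` of `G`:
`S` consists of edges of `G` not in `M` and `M` is the unique perfect matching
of `G - S`. -/
def IsAntiForcingSet (G : SimpleGraph V) (M S : Set (Sym2 V)) : Prop :=
  S ⊆ G.edgeSet \ M ∧ IsUniquePM (G.deleteEdges S) M

/-- The anti-forcing number of a perfect matching `M` of `G`. -/
noncomputable def af (G : SimpleGraph V) (M : Set (Sym2 V)) : ℕ :=
  sInf {n | ∃ S : Finset (Sym2 V), S.card = n ∧ IsAntiForcingSet G M ↑S}

section Aux

open SimpleGraph

/-- Membership of a vertex in the `i`-th edge of a walk is membership at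
support position `i` or `i+1`. -/
lemma walk_edge_mem_iff {G : SimpleGraph V} {u v : V} (p : G.Walk u v) {i : ℕ}
    (hi : i < p.edges.length) (hi1 : i < p.support.length)
    (hi2 : i + 1 < p.support.length) (w : V) :
    w ∈ p.edges[i] ↔ w = p.support[i] ∨ w = p.support[i + 1] := by
  have hi' : i < p.darts.length := by rwa [SimpleGraph.Walk.length_darts, ← SimpleGraph.Walk.length_edges]
  have he : p.edges[i] = (p.darts[i]).edge := by
    simp [SimpleGraph.Walk.edges]
  have hfst : (p.darts[i]).fst = p.support[i] := by
    have h1 := SimpleGraph.Walk.map_fst_darts p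
    have hlt : i < (p.darts.map (·.fst)).length := by simpa using hi'
    have h2 : (p.darts.map (·.fst))[i]'hlt =
        p.support.dropLast[i]'(by rw [← h1]; exact hlt) := by
      congr 1
    rw [List.getElem_map] at h2
    rw [h2, List.getElem_dropLast]
  have hsnd : (p.darts[i]).snd = p.support[i + 1] := by
    have h1 := SimpleGraph.Walk.map_snd_darts p
    have hlt : i < (p.darts.map (·.snd)).length := by simpa using hi'
    have h2 : (p.darts.map (·.snd))[i]'hlt =
        p.support.tail[i]'(by rw [← h1]; exact hlt) := by
      congr 1
    rw [List.getElem_map] at h2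
    rw [h2, List.getElem_tail]
  rw [he]
  have hd : (p.darts[i]).edge = s((p.darts[i]).fst, (p.darts[i]).snd) := rfl
  rw [hd, hfst, hsnd, Sym2.mem_iff]

/-- In a cycle, support positions in `[1, length]` are pairwise distinct. -/
lemma cycle_support_inj {G : SimpleGraph V} {v : V} {c : G.Walk v v} (hc : c.IsCycle)
    {j k : ℕ} (hj : j < c.support.length) (hk : k < c.support.length)
    (hj1 : 1 ≤ j) (hk1 : 1 ≤ k) (h : c.support[j] = c.support[k]) : j = k := by
  have hnd := hc.support_nodup
  have htl : c.support.tail.length = c.support.length - 1 := List.length_tail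
  have hjt : j - 1 < c.support.tail.length := by omega
  have hkt : k - 1 < c.support.tail.length := by omega
  have h1 : c.support.tail[j - 1] = c.support[j] := by
    rw [List.getElem_tail]
    congr 1
    omega
  have h2 : c.support.tail[k - 1] = c.support[k] := by
    rw [List.getElem_tail]
    congr 1
    omega
  have h3 : c.support.tail.get ⟨j - 1, hjt⟩ = c.support.tail.get ⟨k - 1, hkt⟩ := by
    simpa [h1, h2] using h
  have h4 := (List.Nodup.get_inj_iff hnd).mp h3
  have h5 := congrArg Fin.val h4
  simp only at h5
  omega

lemma cycle_support_zero {G : SimpleGraph V} {v : V} (c : G.Walk v v)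
    (h0 : 0 < c.support.length) : c.support[0] = v := by
  cases c with
  | nil => simp
  | cons h p => simp [SimpleGraph.Walk.support_cons]

lemma cycle_support_last {G : SimpleGraph V} {v : V} (c : G.Walk v v) :
    c.support[c.length]'(by rw [SimpleGraph.Walk.length_support]; omega) = v := by
  have h := c.getLast_support
  rw [List.getLast_eq_getElem] at h
  simpa [SimpleGraph.Walk.length_support] using h

/-- In an even cycle each support vertex lies in exactly two edges of the cycle,
whose indices have opposite parity. -/
lemma cycle_two_edges {G : SimpleGraph V} {v : V} {c : G.Walk v v} (hc : c.IsCycle)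
    (hev : Even c.edges.length) {w : V} (hw : w ∈ c.support) :
    ∃ a b, ∃ (ha : a < c.edges.length) (hb : b < c.edges.length),
      (Even a ↔ ¬ Even b) ∧ w ∈ c.edges[a] ∧ w ∈ c.edges[b] ∧
      ∀ i (hi : i < c.edges.length), w ∈ c.edges[i] → i = a ∨ i = b := by
  have hlen : c.edges.length = c.length := c.length_edges
  have hslen : c.support.length = c.length + 1 := c.length_support
  have hn3 : 3 ≤ c.length := hc.three_le_length
  have hs0 : c.support[0]'(by omega) = v := cycle_support_zero c (by omega)
  have hsn : c.support[c.length]'(by omega) = v := cycle_support_last c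
  have hmem_iff : ∀ i (hi : i < c.edges.length),
      (w ∈ c.edges[i] ↔ w = c.support[i]'(by omega) ∨ w = c.support[i + 1]'(by omega)) :=
    fun i hi => walk_edge_mem_iff c hi (by omega) (by omega) w
  obtain ⟨k, hk, hks⟩ := List.mem_iff_getElem.mp hw
  by_cases hkv : w = v
  · -- edges at the base vertex: indices 0 and length - 1
    refine ⟨0, c.length - 1, by omega, by omega, ?_, ?_, ?_, ?_⟩
    · rw [hlen] at hev
      rw [Nat.even_iff] at hev ⊢
      rw [Nat.even_iff]
      omega
    · rw [hmem_iff 0 (by omega)]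
      exact Or.inl (by rw [hs0, hkv])
    · rw [hmem_iff (c.length - 1) (by omega)]
      refine Or.inr ?_
      have he : c.support[c.length - 1 + 1]'(by omega) = c.support[c.length]'(by omega) := by
        congr 1
        omega
      rw [he, hsn, hkv]
    · intro i hi hmem
      rw [hmem_iff i hi] at hmem
      rw [hlen] at hi
      rcases hmem with heq | heq
      · left
        by_contra hne
        have hi1 : 1 ≤ i := by omega
        have : i = c.length := cycle_support_inj hc (by omega) (by omega) hi1 (by omega)
          (by rw [← heq, hsn]; exact hkv)
        omega
      · right
        have : i + 1 = c.length := cycle_support_inj hc (by omega) (by omega) (by omega)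
          (by omega) (by rw [← heq]; rw [hsn, hkv])
        omega
  · -- w appears at a unique position k with 1 ≤ k ≤ length - 1
    rw [hslen] at hk
    have hk1 : 1 ≤ k := by
      by_contra h0
      have hz : k = 0 := by omega
      subst hz
      exact hkv (hks.symm.trans hs0)
    have hkn : k ≤ c.length - 1 := by
      by_contra h0
      have : k = c.length := by omega
      apply hkv
      rw [← hks]
      subst this
      exact hsn
    refine ⟨k - 1, k, by omega, by omega, ?_, ?_, ?_, ?_⟩
    · rw [Nat.even_iff, Nat.even_iff]
      omega
    · rw [hmem_iff (k - 1) (by omega)]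
      refine Or.inr ?_
      have he : c.support[k - 1 + 1]'(by omega) = c.support[k]'(by omega) := by
        congr 1
        omega
      rw [he, hks]
    · rw [hmem_iff k (by omega)]
      exact Or.inl hks.symm
    · intro i hi hmem
      rw [hmem_iff i hi] at hmem
      rw [hlen] at hi
      rcases hmem with heq | heq
      · right
        have hi1 : 1 ≤ i := by
          by_contra h0
          have : i = 0 := by omega
          subst this
          exact hkv (heq.trans hs0)
        exact cycle_support_inj hc (by omega) (by omega) hi1 hk1 (by rw [← heq, hks])
      · left
        have : i + 1 = k := cycle_support_inj hc (by omega) (by omega) (by omega) hk1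
          (by rw [← heq, hks])
        omega

/-- At each support vertex of an `M`-alternating cycle there are exactly two
cycle edges through it, exactly one of which is in `M`. -/
lemma alt_cycle_edges_at {G : SimpleGraph V} {M : Set (Sym2 V)} {v : V} {c : G.Walk v v}
    (hc : IsAltCycle M c) {w : V} (hw : w ∈ c.support) :
    ∃ e₁ e₂, e₁ ∈ c.edges ∧ e₂ ∈ c.edges ∧ w ∈ e₁ ∧ w ∈ e₂ ∧ e₁ ∈ M ∧ e₂ ∉ M ∧
      ∀ e ∈ c.edges, w ∈ e → e = e₁ ∨ e = e₂ := by
  obtain ⟨hcyc, hev, halt⟩ := hc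
  obtain ⟨a, b, ha, hb, hpar, hwa, hwb, huniq⟩ := cycle_two_edges hcyc hev hw
  have key : ((c.edges[a] ∈ M ∧ c.edges[b] ∉ M) ∨ (c.edges[b] ∈ M ∧ c.edges[a] ∉ M)) := by
    rcases halt with h | h
    · have h1 := h a ha
      have h2 := h b hb
      simp only [List.get_eq_getElem] at h1 h2
      by_cases hEa : Even a
      · exact Or.inl ⟨h1.mpr hEa, fun hm => (hpar.mp hEa) (h2.mp hm)⟩
      · exact Or.inr ⟨h2.mpr (by tauto), fun hm => hEa (h1.mp hm)⟩
    · have h1 := h a ha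
      have h2 := h b hb
      simp only [List.get_eq_getElem] at h1 h2
      by_cases hEa : Even a
      · exact Or.inr ⟨h2.mpr (hpar.mp hEa), fun hm => (h1.mp hm) hEa⟩
      · exact Or.inl ⟨h1.mpr hEa, fun hm => (h2.mp hm) (by tauto)⟩
  have hmema : c.edges[a] ∈ c.edges := List.getElem_mem _
  have hmemb : c.edges[b] ∈ c.edges := List.getElem_mem _
  have huniq' : ∀ e ∈ c.edges, w ∈ e → e = c.edges[a] ∨ e = c.edges[b] := by
    intro e he hme
    obtain ⟨i, hi, rfl⟩ := List.mem_iff_getElem.mp he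
    rcases huniq i hi hme with h | h
    · left; congr 1
    · right; congr 1
  rcases key with ⟨h1, h2⟩ | ⟨h1, h2⟩
  · exact ⟨c.edges[a], c.edges[b], hmema, hmemb, hwa, hwb, h1, h2,
      huniq'⟩
  · exact ⟨c.edges[b], c.edges[a], hmemb, hmema, hwb, hwa, h1, h2,
      fun e he hme => (huniq' e he hme).symm⟩

lemma mem_support_of_mem_edge {G : SimpleGraph V} {u v w : V} {p : G.Walk u v}
    {e : Sym2 V} (hw : w ∈ e) (he : e ∈ p.edges) : w ∈ p.support := by
  induction e with
  | h x y =>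
    rcases Sym2.mem_iff.mp hw with rfl | rfl
    · exact p.fst_mem_support_of_mem_edges he
    · exact p.snd_mem_support_of_mem_edges he

/-- Any anti-forcing set meets every `M`-alternating cycle. -/
lemma antiforcing_meets_alt_cycle {G : SimpleGraph V} {M S : Set (Sym2 V)}
    (hS : IsAntiForcingSet G M S) {v : V} {c : G.Walk v v} (hc : IsAltCycle M c) :
    ∃ e ∈ c.edges, e ∈ S := by
  by_contra hcon
  push_neg at hcon
  obtain ⟨hSsub, hMd, huniq⟩ := hS
  set C : Set (Sym2 V) := {e | e ∈ c.edges} with hC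
  set M' : Set (Sym2 V) := (M \ C) ∪ (C \ M) with hM'
  have hPM' : IsPM (G.deleteEdges S) M' := by
    constructor
    · intro e he
      rw [SimpleGraph.edgeSet_deleteEdges]
      rcases he with ⟨heM, _⟩ | ⟨heC, _⟩
      · refine ⟨?_, fun hs => (hSsub hs).2 heM⟩
        have := hMd.1 heM
        rw [SimpleGraph.edgeSet_deleteEdges] at this
        exact this.1
      · exact ⟨c.edges_subset_edgeSet heC, hcon e heC⟩
    · intro w
      by_cases hw : w ∈ c.support
      · obtain ⟨e₁, e₂, he₁, he₂, hw₁, hw₂, hm₁, hm₂, hu⟩ := alt_cycle_edges_at hc hw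
        refine ⟨e₂, ⟨Or.inr ⟨he₂, hm₂⟩, hw₂⟩, ?_⟩
        rintro f ⟨hf, hwf⟩
        rcases hf with ⟨hfM, hfC⟩ | ⟨hfC, hfM⟩
        · exfalso
          have := (hMd.2 w).unique ⟨hfM, hwf⟩ ⟨hm₁, hw₁⟩
          exact hfC (this ▸ he₁)
        · rcases hu f hfC hwf with rfl | rfl
          · exact absurd hm₁ hfM
          · rfl
      · obtain ⟨f, ⟨hfM, hwf⟩, hfu⟩ := hMd.2 w
        have hfC : f ∉ C := fun hfc => hw (mem_support_of_mem_edge hwf hfc)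
        refine ⟨f, ⟨Or.inl ⟨hfM, hfC⟩, hwf⟩, ?_⟩
        rintro g ⟨hg, hwg⟩
        rcases hg with ⟨hgM, _⟩ | ⟨hgC, _⟩
        · exact hfu g ⟨hgM, hwg⟩
        · exact absurd (mem_support_of_mem_edge hwg hgC) hw
  have hEq : M' = M := huniq M' hPM'
  obtain ⟨e₁, e₂, he₁, he₂, hw₁, hw₂, hm₁, hm₂, hu⟩ :=
    alt_cycle_edges_at hc c.start_mem_support
  have : e₂ ∈ M' := Or.inr ⟨he₂, hm₂⟩
  rw [hEq] at this
  exact hm₂ this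

/-- The set defining `af` is nonempty. -/
lemma afset_nonempty (G : SimpleGraph V) (M : Set (Sym2 V)) (hM : IsPM G M) :
    {n | ∃ S : Finset (Sym2 V), S.card = n ∧ IsAntiForcingSet G M ↑S}.Nonempty := by
  classical
  refine ⟨(Set.toFinite (G.edgeSet \ M)).toFinset.card,
    (Set.toFinite (G.edgeSet \ M)).toFinset, rfl, ?_⟩
  rw [Set.Finite.coe_toFinset]
  refine ⟨subset_rfl, ⟨⟨?_, hM.2⟩, ?_⟩⟩
  · intro e he
    rw [SimpleGraph.edgeSet_deleteEdges]
    exact ⟨hM.1 he, fun hs => hs.2 he⟩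
  · intro M' hM'
    have hsub : M' ⊆ M := by
      intro e he
      have := hM'.1 he
      rw [SimpleGraph.edgeSet_deleteEdges] at this
      by_contra hem
      exact this.2 ⟨this.1, hem⟩
    refine Set.Subset.antisymm hsub ?_
    intro e he
    induction e with
    | h x y =>
      obtain ⟨f, ⟨hfM', hxf⟩, _⟩ := hM'.2 x
      have : f = s(x, y) := (hM.2 x).unique ⟨hsub hfM', hxf⟩ ⟨he, by simp⟩
      exact this ▸ hfM'

end Aux

/-- If `𝒜` is a compatible `M`-alternating set of cycles (here an
injective family of `n` `M`-alternating cycles, any two of which meet only in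
edges of `M`), then `af(G, M) ≥ n = |𝒜|`. -/
theorem statement6 (G : SimpleGraph V) (M : Set (Sym2 V)) (hM : IsPM G M)
    (n : ℕ) (v : Fin n → V) (c : ∀ i, G.Walk (v i) (v i))
    (halt : ∀ i, IsAltCycle M (c i))
    (hinj : ∀ i j, i ≠ j → (c i).edges.toFinset ≠ (c j).edges.toFinset)
    (hcompat : ∀ i j, i ≠ j → ∀ e, e ∈ (c i).edges → e ∈ (c j).edges → e ∈ M) :
    n ≤ af G M := by
  classical
  refine le_csInf (afset_nonempty G M hM) ?_
  rintro m ⟨S, rfl, hS⟩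
  have hex : ∀ i : Fin n, ∃ e ∈ (c i).edges, e ∈ (↑S : Set (Sym2 V)) :=
    fun i => antiforcing_meets_alt_cycle hS (halt i)
  choose e he hes using hex
  have hinjf : Function.Injective fun i : Fin n =>
      (⟨e i, by simpa using hes i⟩ : {x // x ∈ S}) := by
    intro i j hij
    by_contra hne
    have heq : e i = e j := congrArg Subtype.val hij
    have hmem : e i ∈ M := hcompat i j hne (e i) (he i) (heq ▸ he j)
    exact (hS.1 (hes i)).2 hmem
  calc n = Fintype.card (Fin n) := (Fintype.card_fin n).symm
    _ ≤ Fintype.card {x // x ∈ S} := Fintype.card_le_of_injective _ hinjf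
    _ = S.card := Fintype.card_coe S
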